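/- arXiv:2107.10177 — 4 statements merged into one kernel-verified Lean document; each statement's English description precedes it below -/
import Mathlib

section
/- Let χ_f > 0, Δ > 0, set λ = χ_f + 1/Δ, and let L be the 2×2 real matrix with rows (−χ_f, χ_f) and (1/Δ, −1/Δ). Then for every Δt ∈ ℝ, the matrix exponential exp(Δt·L) equals (1/(1 + χ_f·Δ)) times the 2×2 matrix with rows (1 + χ_f·Δ·e^{−λ·Δt}, χ_f·Δ·(1 − e^{−λ·Δt})) and (1 − e^{−λ·Δt}, χ_f·Δ + e^{−λ·Δt}). -/
open Matrix

/-- The matrix exponential of the SFD subsystem operator `L = [[-χ_f, χ_f], [1/Δ, -1/Δ]]`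
over a time step `Δt`:
`exp(Δt L) = (1/(1+χ_f Δ)) [[1 + χ_f Δ e^{-λΔt}, χ_f Δ (1 - e^{-λΔt})],
[1 - e^{-λΔt}, χ_f Δ + e^{-λΔt}]]` where `λ = χ_f + 1/Δ`. -/
theorem sfd_matrix_exponential (χf Δ : ℝ) (hχ : 0 < χf) (hΔ : 0 < Δ) (Δt : ℝ) :
    NormedSpace.exp (Δt • (!![-χf, χf; 1 / Δ, -1 / Δ] : Matrix (Fin 2) (Fin 2) ℝ))
      = (1 / (1 + χf * Δ)) •
        !![1 + χf * Δ * Real.exp (-(χf + 1 / Δ) * Δt),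
            χf * Δ * (1 - Real.exp (-(χf + 1 / Δ) * Δt));
          1 - Real.exp (-(χf + 1 / Δ) * Δt),
            χf * Δ + Real.exp (-(χf + 1 / Δ) * Δt)] := by
  have hΔ' : Δ ≠ 0 := ne_of_gt hΔ
  have hlam : χf + 1 / Δ ≠ 0 := by positivity
  have hden : 1 + χf * Δ ≠ 0 := by positivity
  set S : Matrix (Fin 2) (Fin 2) ℝ := !![1, χf; 1, -1/Δ] with hS
  set T : Matrix (Fin 2) (Fin 2) ℝ :=
    (1 / (χf + 1/Δ)) • !![1/Δ, χf; 1, -1] with hT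
  have hST : S * T = 1 := by
    ext i j
    fin_cases i <;> fin_cases j <;>
      simp [hS, hT, Matrix.mul_apply, Fin.sum_univ_two, Matrix.one_apply] <;>
      field_simp <;> ring
  have hTS : T * S = 1 := by
    ext i j
    fin_cases i <;> fin_cases j <;>
      simp [hS, hT, Matrix.mul_apply, Fin.sum_univ_two, Matrix.one_apply] <;>
      field_simp <;> ring
  set U : (Matrix (Fin 2) (Fin 2) ℝ)ˣ := ⟨S, T, hST, hTS⟩ with hU
  set v : Fin 2 → ℝ := ![0, -(χf + 1/Δ) * Δt] with hv
  have hdiag : (diagonal v : Matrix (Fin 2) (Fin 2) ℝ)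
      = !![0, 0; 0, -(χf + 1/Δ) * Δt] := by
    ext i j
    fin_cases i <;> fin_cases j <;> simp [hv, Matrix.diagonal_apply]
  have hconj : Δt • (!![-χf, χf; 1 / Δ, -1 / Δ] : Matrix (Fin 2) (Fin 2) ℝ)
      = (U : Matrix (Fin 2) (Fin 2) ℝ) * diagonal v * ((U⁻¹ : (Matrix (Fin 2) (Fin 2) ℝ)ˣ) : Matrix (Fin 2) (Fin 2) ℝ) := by
    show _ = S * diagonal v * T
    rw [hdiag]
    ext i j
    fin_cases i <;> fin_cases j <;>
      simp [hS, hT, Matrix.mul_apply, Fin.sum_univ_two] <;>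
      field_simp <;> ring
  rw [hconj, Matrix.exp_units_conj, Matrix.exp_diagonal]
  show S * diagonal (NormedSpace.exp v) * T = _
  have hev : (NormedSpace.exp v) = ![1, Real.exp (-(χf + 1/Δ) * Δt)] := by
    rw [Pi.exp_def]
    funext i
    fin_cases i <;> simp [hv, ← Real.exp_eq_exp_ℝ]
  rw [hev]
  have hdiag2 : (diagonal ![1, Real.exp (-(χf + 1/Δ) * Δt)] : Matrix (Fin 2) (Fin 2) ℝ)
      = !![1, 0; 0, Real.exp (-(χf + 1/Δ) * Δt)] := by
    ext i j
    fin_cases i <;> fin_cases j <;> simp [Matrix.diagonal_apply]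
  rw [hdiag2]
  ext i j
  fin_cases i <;> fin_cases j <;>
    simp [hS, hT, Matrix.mul_apply, Fin.sum_univ_two] <;>
    field_simp <;> ring
end

section
/- Let χ_f > 0 and Δ > 0, and let q, q̄ : ℝ → ℝ be differentiable functions satisfying the SFD subsystem q′(t) = −χ_f(q(t) − q̄(t)) and q̄′(t) = (q(t) − q̄(t))/Δ for all t. Then both q(t) and q̄(t) converge, as t → ∞, to the common limit (q(0) + χ_f·Δ·q̄(0))/(1 + χ_f·Δ). -/
open Filter Topology

/-- Solutions of the SFD subsystem `q' = -χ_f (q - q̄)`, `q̄' = (q - q̄)/Δ` converge,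
as `t → ∞`, to the common limit `(q(0) + χ_f Δ q̄(0))/(1 + χ_f Δ)`. -/
theorem sfd_common_limit (χf Δ : ℝ) (hχ : 0 < χf) (hΔ : 0 < Δ)
    (q qbar : ℝ → ℝ)
    (hq : ∀ t : ℝ, HasDerivAt q (-χf * (q t - qbar t)) t)
    (hqbar : ∀ t : ℝ, HasDerivAt qbar ((q t - qbar t) / Δ) t) :
    Tendsto q atTop (𝓝 ((q 0 + χf * Δ * qbar 0) / (1 + χf * Δ))) ∧
    Tendsto qbar atTop (𝓝 ((q 0 + χf * Δ * qbar 0) / (1 + χf * Δ))) := by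
  set lam : ℝ := χf + 1/Δ with hlam
  have hlam_pos : 0 < lam := by positivity
  set d : ℝ → ℝ := fun t => q t - qbar t with hd
  have hd' : ∀ t, HasDerivAt d (-lam * d t) t := by
    intro t
    have h := (hq t).sub (hqbar t)
    refine h.congr_deriv ?_
    simp only [hd, hlam]
    field_simp
    ring
  -- g := d * exp(lam t) is constant
  set g : ℝ → ℝ := fun t => d t * Real.exp (lam * t) with hg
  have hexp : ∀ t : ℝ, HasDerivAt (fun t => Real.exp (lam * t))
      (Real.exp (lam * t) * lam) t := by
    intro t
    refine ((Real.hasDerivAt_exp (lam * t)).comp t ((hasDerivAt_id t).const_mul lam)).congr_deriv ?_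
    simp
  have hg' : ∀ t, HasDerivAt g 0 t := by
    intro t
    have h := (hd' t).mul (hexp t)
    refine h.congr_deriv ?_
    ring
  have hgconst : ∀ t : ℝ, g t = g 0 := by
    intro t
    exact is_const_of_deriv_eq_zero (fun x => (hg' x).differentiableAt)
      (fun x => (hg' x).deriv) t 0
  have hdeq : ∀ t : ℝ, d t = d 0 * Real.exp (-(lam * t)) := by
    intro t
    have h := hgconst t
    simp only [hg] at h
    rw [Real.exp_neg]
    field_simp at h ⊢
    simpa [mul_comm] using h
  -- s := q + χf Δ qbar is constant
  set s : ℝ → ℝ := fun t => q t + χf * Δ * qbar t with hs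
  have hs' : ∀ t, HasDerivAt s 0 t := by
    intro t
    have h := (hq t).add ((hqbar t).const_mul (χf * Δ))
    refine h.congr_deriv ?_
    field_simp
    ring
  have hsconst : ∀ t : ℝ, s t = s 0 := by
    intro t
    exact is_const_of_deriv_eq_zero (fun x => (hs' x).differentiableAt)
      (fun x => (hs' x).deriv) t 0
  have hden : (1 : ℝ) + χf * Δ ≠ 0 := by positivity
  have hqeq : ∀ t : ℝ, q t = (s 0 + χf * Δ * d t) / (1 + χf * Δ) := by
    intro t
    have h := hsconst t
    simp only [hs, hd] at h ⊢
    field_simp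
    linarith [h]
  have hqbeq : ∀ t : ℝ, qbar t = (s 0 - d t) / (1 + χf * Δ) := by
    intro t
    have h := hsconst t
    simp only [hs, hd] at h ⊢
    field_simp
    linarith [h]
  have hdt : Tendsto d atTop (𝓝 0) := by
    have h1 : Tendsto (fun t : ℝ => lam * t) atTop atTop :=
      Tendsto.const_mul_atTop hlam_pos tendsto_id
    have h2 : Tendsto (fun t : ℝ => Real.exp (-(lam * t))) atTop (𝓝 0) :=
      Real.tendsto_exp_neg_atTop_nhds_zero.comp h1
    have h3 : Tendsto (fun t : ℝ => d 0 * Real.exp (-(lam * t))) atTop (𝓝 (d 0 * 0)) :=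
      h2.const_mul (d 0)
    rw [mul_zero] at h3
    exact h3.congr (fun t => (hdeq t).symm)
  have hs0 : s 0 = q 0 + χf * Δ * qbar 0 := rfl
  constructor
  · have h : Tendsto (fun t => (s 0 + χf * Δ * d t) / (1 + χf * Δ)) atTop
        (𝓝 ((s 0 + χf * Δ * 0) / (1 + χf * Δ))) :=
      (((tendsto_const_nhds.add (hdt.const_mul (χf * Δ)))).div_const _)
    rw [mul_zero, add_zero, hs0] at h
    exact h.congr (fun t => (hqeq t).symm)
  · have h : Tendsto (fun t => (s 0 - d t) / (1 + χf * Δ)) atTop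
        (𝓝 ((s 0 - 0) / (1 + χf * Δ))) :=
      ((tendsto_const_nhds.sub hdt).div_const _)
    rw [sub_zero, hs0] at h
    exact h.congr (fun t => (hqbeq t).symm)
end

section
/- Let η > 0, χ_f > 0, Δ > 0 and u_s ∈ ℝ, and let q, q̄ : ℝ → ℝ be differentiable functions satisfying the combined volume-penalization/SFD system q′(t) = −(1/η)(q(t) − u_s) − χ_f(q(t) − q̄(t)), q̄′(t) = (q(t) − q̄(t))/Δ for all t. Then q(t) → u_s and q̄(t) → u_s as t → ∞; that is, unlike the SFD subsystem alone, the combined method drives the velocity inside the solid to the imposed boundary value u_s. -/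
open Filter Topology

/-- A scalar linear ODE `f' = c f` with `c < 0` decays to zero. -/
lemma decay_aux (c : ℝ) (hc : c < 0) (f : ℝ → ℝ)
    (hf : ∀ t, HasDerivAt f (c * f t) t) : Tendsto f atTop (𝓝 0) := by
  have hg : ∀ t : ℝ, HasDerivAt (fun s => f s * Real.exp (-c * s)) 0 t := by
    intro t
    have he := (((hasDerivAt_id t).const_mul (-c))).exp
    have := (hf t).mul he
    exact this.congr_deriv (by ring)
  have hconst : ∀ t : ℝ, f t * Real.exp (-c * t) = f 0 := by
    intro t
    have := is_const_of_deriv_eq_zero (f := fun s => f s * Real.exp (-c * s))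
      (fun s => (hg s).differentiableAt) (fun s => (hg s).deriv) t 0
    simpa using this
  have hrep : ∀ t : ℝ, f t = f 0 * Real.exp (c * t) := by
    intro t
    have h := hconst t
    rw [← h, mul_assoc, ← Real.exp_add]
    simp
  have : Tendsto (fun t => f 0 * Real.exp (c * t)) atTop (𝓝 (f 0 * 0)) := by
    apply Tendsto.const_mul
    exact Real.tendsto_exp_atBot.comp ((tendsto_const_mul_atBot_of_neg hc).2 tendsto_id)
  simp only [mul_zero] at this
  exact Tendsto.congr (fun t => (hrep t).symm) this

/-- Solutions of the combined volume-penalization/SFD system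
`q' = -(1/η)(q - u_s) - χ_f (q - q̄)`, `q̄' = (q - q̄)/Δ` drive the velocity inside
the solid to the imposed boundary value: `q(t) → u_s` and `q̄(t) → u_s` as `t → ∞`. -/
theorem combined_penalization_sfd_convergence (η χf Δ u_s : ℝ)
    (hη : 0 < η) (hχ : 0 < χf) (hΔ : 0 < Δ)
    (q qbar : ℝ → ℝ)
    (hq : ∀ t : ℝ, HasDerivAt q (-(1 / η) * (q t - u_s) - χf * (q t - qbar t)) t)
    (hqbar : ∀ t : ℝ, HasDerivAt qbar ((q t - qbar t) / Δ) t) :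
    Tendsto q atTop (𝓝 u_s) ∧ Tendsto qbar atTop (𝓝 u_s) := by
  have hΔ' : Δ ≠ 0 := ne_of_gt hΔ
  have hη' : η ≠ 0 := ne_of_gt hη
  set a := 1 / η with ha_def
  have hA : 0 < a := by positivity
  set b := 1 - Δ * (a + χf) with hb_def
  set s := Real.sqrt (b ^ 2 + 4 * χf * Δ) with hs_def
  have hs2 : s ^ 2 = b ^ 2 + 4 * χf * Δ := Real.sq_sqrt (by positivity)
  have hspos : 0 < s := Real.sqrt_pos.2 (by positivity)
  set α₁ := (-b + s) / 2 with hα₁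
  set α₂ := (-b - s) / 2 with hα₂
  have hroot₁ : α₁ ^ 2 + α₁ * b - χf * Δ = 0 := by
    rw [hα₁]; linear_combination hs2 / 4
  have hroot₂ : α₂ ^ 2 + α₂ * b - χf * Δ = 0 := by
    rw [hα₂]; linear_combination hs2 / 4
  have hαΔ : 0 < Δ * (a + χf) := by positivity
  have hlam₁ : α₁ / Δ - (a + χf) < 0 := by
    have hsR : s < Δ * (a + χf) + 1 := by
      nlinarith [hs2, hspos, hαΔ, mul_pos hΔ hA]
    have h1 : α₁ < Δ * (a + χf) := by
      rw [hα₁, hb_def]; nlinarith [hsR]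
    rw [sub_neg, div_lt_iff₀ hΔ]
    nlinarith [h1]
  have hlam₂ : α₂ / Δ - (a + χf) < 0 := by
    have hsb : -b ≤ s := by
      nlinarith [hs2, hspos, mul_pos hχ hΔ]
    have h2 : α₂ ≤ 0 := by rw [hα₂]; linarith
    rw [sub_neg, div_lt_iff₀ hΔ]
    nlinarith [h2, hαΔ]
  -- the decoupled eigenfunctions
  have key : ∀ α : ℝ, α / Δ - (a + χf) < 0 → α ^ 2 + α * b - χf * Δ = 0 →
      Tendsto (fun t => (q t - u_s) + α * (qbar t - u_s)) atTop (𝓝 0) := by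
    intro α hlamneg hroot
    apply decay_aux (α / Δ - (a + χf)) hlamneg
    intro t
    have hd : HasDerivAt (fun t => (q t - u_s) + α * (qbar t - u_s))
        ((-(1 / η) * (q t - u_s) - χf * (q t - qbar t)) + α * ((q t - qbar t) / Δ)) t :=
      ((hq t).sub_const u_s).add (((hqbar t).sub_const u_s).const_mul α)
    convert hd using 1
    rw [hb_def] at hroot
    rw [← ha_def]
    field_simp
    linear_combination (qbar t - u_s) * hroot
  have hw₁ := key α₁ hlam₁ hroot₁
  have hw₂ := key α₂ hlam₂ hroot₂
  have hy : Tendsto (fun t => qbar t - u_s) atTop (𝓝 0) := by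
    have := (hw₁.sub hw₂).div_const s
    have heq : ∀ t : ℝ, (((q t - u_s) + α₁ * (qbar t - u_s)) -
        ((q t - u_s) + α₂ * (qbar t - u_s))) / s = qbar t - u_s := by
      intro t
      have hα : α₁ - α₂ = s := by rw [hα₁, hα₂]; ring
      field_simp
      linear_combination (qbar t - u_s) * hα
    simpa [heq, Tendsto.congr heq] using Tendsto.congr heq (by simpa using this)
  have hx : Tendsto (fun t => q t - u_s) atTop (𝓝 0) := by
    have := hw₁.sub (hy.const_mul α₁)
    simp only [mul_zero, sub_zero] at this
    refine Tendsto.congr (fun t => ?_) (by simpa using this)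
    ring
  constructor
  · have := hx.add_const u_s
    simpa using this
  · have := hy.add_const u_s
    simpa using this
end

section
/- Let c ∈ ℝ, χ_f > 0, Δ > 0, and let χ : ℝ → ℝ be measurable with 0 ≤ χ(x) ≤ 1 for all x. Let u, ū : ℝ × ℝ → ℝ be continuously differentiable, 2-periodic in x, and satisfy the SFD-augmented advection system ∂u/∂t + c·∂u/∂x = −χ(x)·χ_f·(u − ū) and ∂ū/∂t = χ(x)·(u − ū)/Δ at every point. Then the functional E(t) = ∫_{−1}^{1} [u(x, t)² + χ_f·Δ·ū(x, t)²] dx is a nonincreasing function of t; that is, the SFD forcing acts as a dissipation mechanism for the periodic advection problem, damping the oscillations inside the solid region. -/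
open MeasureTheory

private lemma sfd_hasDerivAt_snd {f : ℝ × ℝ → ℝ} (hf : ContDiff ℝ 1 f) (x t : ℝ) :
    HasDerivAt (fun t' => f (x, t')) (fderiv ℝ f (x, t) (0, 1)) t := by
  have h1 : HasDerivAt (fun t' : ℝ => ((x : ℝ), t')) ((0 : ℝ), (1 : ℝ)) t :=
    (hasDerivAt_const t x).prodMk (hasDerivAt_id t)
  exact ((hf.differentiable one_ne_zero (x, t)).hasFDerivAt).comp_hasDerivAt t h1

private lemma sfd_hasDerivAt_fst {f : ℝ × ℝ → ℝ} (hf : ContDiff ℝ 1 f) (x t : ℝ) :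
    HasDerivAt (fun x' => f (x', t)) (fderiv ℝ f (x, t) (1, 0)) x := by
  have h1 : HasDerivAt (fun x' : ℝ => (x', (t : ℝ))) ((1 : ℝ), (0 : ℝ)) x :=
    (hasDerivAt_id x).prodMk (hasDerivAt_const x t)
  exact ((hf.differentiable one_ne_zero (x, t)).hasFDerivAt).comp_hasDerivAt x h1

private lemma sfd_cont_fderiv_apply {f : ℝ × ℝ → ℝ} (hf : ContDiff ℝ 1 f) (v : ℝ × ℝ) :
    Continuous (fun p : ℝ × ℝ => fderiv ℝ f p v) :=
  (ContinuousLinearMap.apply ℝ ℝ v).continuous.comp (hf.continuous_fderiv one_ne_zero)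

/-- Energy dissipation for the SFD-augmented periodic advection problem: if `u, ū`
are `C¹`, `2`-periodic in `x`, and solve `∂u/∂t + c ∂u/∂x = -χ(x) χ_f (u - ū)`,
`∂ū/∂t = χ(x)(u - ū)/Δ` with `0 ≤ χ ≤ 1` measurable, `χ_f > 0`, `Δ > 0`, then
`E(t) = ∫_{-1}^{1} [u² + χ_f Δ ū²] dx` is nonincreasing in `t`. -/
theorem sfd_advection_energy_decay (c χf Δ : ℝ) (hχf : 0 < χf) (hΔ : 0 < Δ)
    (χ : ℝ → ℝ) (hχmeas : Measurable χ) (hχ : ∀ x : ℝ, 0 ≤ χ x ∧ χ x ≤ 1)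
    (u ubar : ℝ → ℝ → ℝ)
    (hureg : ContDiff ℝ 1 (fun p : ℝ × ℝ => u p.1 p.2))
    (hubarreg : ContDiff ℝ 1 (fun p : ℝ × ℝ => ubar p.1 p.2))
    (huper : ∀ x t : ℝ, u (x + 2) t = u x t)
    (hubarper : ∀ x t : ℝ, ubar (x + 2) t = ubar x t)
    (hpde : ∀ x t : ℝ,
      deriv (fun t' : ℝ => u x t') t + c * deriv (fun x' : ℝ => u x' t) x
        = -χ x * χf * (u x t - ubar x t))
    (hpdebar : ∀ x t : ℝ,
      deriv (fun t' : ℝ => ubar x t') t = χ x * (u x t - ubar x t) / Δ) :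
    Antitone (fun t : ℝ =>
      ∫ x in (-1 : ℝ)..1, ((u x t) ^ 2 + χf * Δ * (ubar x t) ^ 2)) := by
  intro s t hst
  dsimp only
  -- partial derivatives
  set ut : ℝ → ℝ → ℝ := fun x τ => fderiv ℝ (fun p : ℝ × ℝ => u p.1 p.2) (x, τ) (0, 1) with hutdef
  set ux : ℝ → ℝ → ℝ := fun x τ => fderiv ℝ (fun p : ℝ × ℝ => u p.1 p.2) (x, τ) (1, 0) with huxdef
  set vt : ℝ → ℝ → ℝ := fun x τ => fderiv ℝ (fun p : ℝ × ℝ => ubar p.1 p.2) (x, τ) (0, 1) with hvtdef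
  have hut : ∀ x τ : ℝ, HasDerivAt (fun t' => u x t') (ut x τ) τ := fun x τ =>
    sfd_hasDerivAt_snd hureg x τ
  have hux : ∀ x τ : ℝ, HasDerivAt (fun x' => u x' τ) (ux x τ) x := fun x τ =>
    sfd_hasDerivAt_fst hureg x τ
  have hvt : ∀ x τ : ℝ, HasDerivAt (fun t' => ubar x t') (vt x τ) τ := fun x τ =>
    sfd_hasDerivAt_snd hubarreg x τ
  -- PDEs in terms of these derivatives
  have hA : ∀ x τ : ℝ, ut x τ = -c * ux x τ + (-χ x * χf * (u x τ - ubar x τ)) := by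
    intro x τ
    have h := hpde x τ
    rw [(hut x τ).deriv, (hux x τ).deriv] at h
    linarith
  have hB : ∀ x τ : ℝ, vt x τ = χ x * (u x τ - ubar x τ) / Δ := by
    intro x τ
    have h := hpdebar x τ
    rw [(hvt x τ).deriv] at h
    exact h
  -- continuity facts
  have hucont : Continuous (fun p : ℝ × ℝ => u p.1 p.2) := hureg.continuous
  have hvcont : Continuous (fun p : ℝ × ℝ => ubar p.1 p.2) := hubarreg.continuous
  have hutcont : Continuous (fun p : ℝ × ℝ => ut p.1 p.2) := sfd_cont_fderiv_apply hureg (0, 1)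
  have huxcont : Continuous (fun p : ℝ × ℝ => ux p.1 p.2) := sfd_cont_fderiv_apply hureg (1, 0)
  have hvtcont : Continuous (fun p : ℝ × ℝ => vt p.1 p.2) := sfd_cont_fderiv_apply hubarreg (0, 1)
  -- the time derivative of the energy density
  set g : ℝ → ℝ → ℝ :=
    fun x τ => 2 * u x τ * ut x τ + χf * Δ * (2 * ubar x τ * vt x τ) with hgdef
  have hgcont : Continuous (fun p : ℝ × ℝ => g p.1 p.2) := by
    apply Continuous.add
    · exact (continuous_const.mul hucont).mul hutcont
    · exact continuous_const.mul ((continuous_const.mul hvcont).mul hvtcont)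
  have hFderiv : ∀ x τ : ℝ,
      HasDerivAt (fun τ' => u x τ' ^ 2 + χf * Δ * ubar x τ' ^ 2) (g x τ) τ := by
    intro x τ
    have h1 := (hut x τ).fun_pow 2
    have h2 := ((hvt x τ).fun_pow 2).const_mul (χf * Δ)
    refine (h1.add h2).congr_deriv ?_
    push_cast
    ring
  -- FTC in time for each x
  have hFTCt : ∀ x : ℝ, ∫ τ in s..t, g x τ =
      (u x t ^ 2 + χf * Δ * ubar x t ^ 2) - (u x s ^ 2 + χf * Δ * ubar x s ^ 2) := by
    intro x
    apply intervalIntegral.integral_eq_sub_of_hasDerivAt (fun τ _ => hFderiv x τ)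
    exact (hgcont.comp (Continuous.prodMk_right x)).intervalIntegrable s t
  -- integrability of x-slices of the energy density
  have hFint : ∀ τ : ℝ, IntervalIntegrable
      (fun x => u x τ ^ 2 + χf * Δ * ubar x τ ^ 2) volume (-1) 1 := by
    intro τ
    apply Continuous.intervalIntegrable
    have h1 : Continuous (fun x => u x τ) := hucont.comp (Continuous.prodMk_left τ)
    have h2 : Continuous (fun x => ubar x τ) := hvcont.comp (Continuous.prodMk_left τ)
    exact (h1.pow 2).add (continuous_const.mul (h2.pow 2))
  -- the difference of energies as a double integral
  have hdiff : (∫ x in (-1:ℝ)..1, (u x t ^ 2 + χf * Δ * ubar x t ^ 2))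
      - (∫ x in (-1:ℝ)..1, (u x s ^ 2 + χf * Δ * ubar x s ^ 2))
      = ∫ x in (-1:ℝ)..1, ∫ τ in s..t, g x τ := by
    rw [← intervalIntegral.integral_sub (hFint t) (hFint s)]
    apply intervalIntegral.integral_congr
    intro x _
    exact (hFTCt x).symm
  -- Fubini: swap the two integrals
  have neg1le : (-1 : ℝ) ≤ 1 := by norm_num
  have hintprod : Integrable (Function.uncurry g)
      ((volume.restrict (Set.Ioc (-1:ℝ) 1)).prod (volume.restrict (Set.Ioc s t))) := by
    rw [Measure.prod_restrict, ← Measure.volume_eq_prod]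
    have hcpt : IsCompact ((Set.Icc (-1:ℝ) 1) ×ˢ (Set.Icc s t)) :=
      isCompact_Icc.prod isCompact_Icc
    have : IntegrableOn (Function.uncurry g) ((Set.Icc (-1:ℝ) 1) ×ˢ (Set.Icc s t)) volume := by
      have : Continuous (Function.uncurry g) := hgcont
      exact this.continuousOn.integrableOn_compact hcpt
    exact this.mono_set (Set.prod_mono Set.Ioc_subset_Icc_self Set.Ioc_subset_Icc_self)
  have hswap : ∫ x in (-1:ℝ)..1, ∫ τ in s..t, g x τ
      = ∫ τ in Set.Ioc s t, ∫ x in Set.Ioc (-1:ℝ) 1, g x τ := by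
    rw [intervalIntegral.integral_of_le neg1le]
    have : ∀ x : ℝ, (∫ τ in s..t, g x τ) = ∫ τ in Set.Ioc s t, g x τ := fun x =>
      intervalIntegral.integral_of_le hst
    simp_rw [this]
    exact integral_integral_swap hintprod
  -- the inner spatial integral is nonpositive at each time
  have hinner : ∀ τ : ℝ, (∫ x in (-1:ℝ)..1, g x τ) ≤ 0 := by
    intro τ
    have hid : ∀ x : ℝ, g x τ =
        -c * (2 * u x τ * ux x τ) + (-2 * χf) * (χ x * (u x τ - ubar x τ) ^ 2) := by
      intro x
      rw [hgdef]
      dsimp only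
      rw [hA x τ, hB x τ]
      field_simp
      ring
    rw [intervalIntegral.integral_congr (fun x _ => hid x)]
    -- integrability of both pieces
    have huxτ : Continuous (fun x => ux x τ) := huxcont.comp (Continuous.prodMk_left τ)
    have huτ : Continuous (fun x => u x τ) := hucont.comp (Continuous.prodMk_left τ)
    have hvτ : Continuous (fun x => ubar x τ) := hvcont.comp (Continuous.prodMk_left τ)
    have hint1 : IntervalIntegrable (fun x => -c * (2 * u x τ * ux x τ)) volume (-1) 1 :=
      (continuous_const.mul ((continuous_const.mul huτ).mul huxτ)).intervalIntegrable _ _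
    have hqcont : Continuous (fun x => (u x τ - ubar x τ) ^ 2) := (huτ.sub hvτ).pow 2
    have hint2 : IntervalIntegrable
        (fun x => (-2 * χf) * (χ x * (u x τ - ubar x τ) ^ 2)) volume (-1) 1 := by
      apply IntervalIntegrable.mono_fun
        (((continuous_const.mul hqcont).intervalIntegrable (-1) 1) :
          IntervalIntegrable (fun x => (2 * χf) * (u x τ - ubar x τ) ^ 2) volume (-1) 1)
      · exact (((hχmeas.mul (hqcont.measurable)).const_mul
          (-2 * χf)).aestronglyMeasurable)
      · apply Filter.Eventually.of_forall
        intro x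
        have h0 := (hχ x).1
        have h1 := (hχ x).2
        have hq : (0:ℝ) ≤ (u x τ - ubar x τ) ^ 2 := sq_nonneg _
        simp only [Real.norm_eq_abs, Pi.mul_apply]
        rw [abs_of_nonneg (by positivity : (0:ℝ) ≤ 2 * χf * (u x τ - ubar x τ) ^ 2),
          abs_of_nonpos (by nlinarith [mul_nonneg h0 hq] :
            (-2 * χf) * (χ x * (u x τ - ubar x τ) ^ 2) ≤ 0)]
        have hle : χ x * (u x τ - ubar x τ) ^ 2 ≤ (u x τ - ubar x τ) ^ 2 :=
          mul_le_of_le_one_left hq h1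
        nlinarith [mul_nonneg h0 hq]
    rw [intervalIntegral.integral_add hint1 hint2]
    -- first piece: zero by periodicity
    have hfirst : (∫ x in (-1:ℝ)..1, -c * (2 * u x τ * ux x τ)) = 0 := by
      rw [intervalIntegral.integral_const_mul]
      have hsq : ∀ x ∈ Set.uIcc (-1:ℝ) 1,
          HasDerivAt (fun x' => u x' τ ^ 2) (2 * u x τ * ux x τ) x := by
        intro x _
        have := (hux x τ).fun_pow 2
        refine this.congr_deriv ?_
        push_cast
        ring
      have hintd : IntervalIntegrable (fun x => 2 * u x τ * ux x τ) volume (-1) 1 :=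
        ((continuous_const.mul huτ).mul huxτ).intervalIntegrable _ _
      rw [intervalIntegral.integral_eq_sub_of_hasDerivAt hsq hintd]
      have : u 1 τ = u (-1) τ := by
        have := huper (-1) τ
        norm_num at this
        exact this
      rw [this]
      ring
    -- second piece: nonpositive
    have hsecond : (∫ x in (-1:ℝ)..1, (-2 * χf) * (χ x * (u x τ - ubar x τ) ^ 2)) ≤ 0 := by
      rw [intervalIntegral.integral_const_mul]
      have hnn : (0:ℝ) ≤ ∫ x in (-1:ℝ)..1, χ x * (u x τ - ubar x τ) ^ 2 :=
        intervalIntegral.integral_nonneg neg1le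
          (fun x _ => mul_nonneg (hχ x).1 (sq_nonneg _))
      nlinarith
    linarith
  -- conclude
  have hfinal : (∫ τ in Set.Ioc s t, ∫ x in Set.Ioc (-1:ℝ) 1, g x τ) ≤ 0 := by
    apply integral_nonpos_of_ae
    apply Filter.Eventually.of_forall
    intro τ
    have := hinner τ
    rwa [intervalIntegral.integral_of_le neg1le] at this
  linarith [hdiff ▸ (hswap ▸ hfinal : (∫ x in (-1:ℝ)..1, ∫ τ in s..t, g x τ) ≤ 0)]
end
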